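/- Let G be a graph with n vertices, m edges, adjacency eigenvalues λ₁ ≥ ... ≥ λₙ, energy E = Σ|λᵢ|, and t = min over i of |λᵢ|. Then E ≥ (2m + n·λ₁·t)/(λ₁ + t), provided λ₁ + t > 0. -/

import Mathlib

open Matrix Finset

lemma trace_sq_eq_sum_sq_eigenvalues {V : Type*} [Fintype V] [DecidableEq V]
    (A : Matrix V V ℝ) (hA : A.IsHermitian) :
    (A * A).trace = ∑ i, (hA.eigenvalues i) ^ 2 := by
  have hU' : star (hA.eigenvectorUnitary : Matrix V V ℝ) *
      (hA.eigenvectorUnitary : Matrix V V ℝ) = 1 :=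
    Matrix.mem_unitaryGroup_iff'.mp hA.eigenvectorUnitary.2
  conv_lhs => rw [hA.spectral_theorem, Unitary.conjStarAlgAut_apply]
  have key : (hA.eigenvectorUnitary : Matrix V V ℝ) *
        Matrix.diagonal (RCLike.ofReal ∘ hA.eigenvalues) *
        star (hA.eigenvectorUnitary : Matrix V V ℝ) *
      ((hA.eigenvectorUnitary : Matrix V V ℝ) *
        Matrix.diagonal (RCLike.ofReal ∘ hA.eigenvalues) *
        star (hA.eigenvectorUnitary : Matrix V V ℝ))
      = (hA.eigenvectorUnitary : Matrix V V ℝ) *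
        (Matrix.diagonal (RCLike.ofReal ∘ hA.eigenvalues) *
         Matrix.diagonal (RCLike.ofReal ∘ hA.eigenvalues)) *
        star (hA.eigenvectorUnitary : Matrix V V ℝ) := by
    simp only [Matrix.mul_assoc]
    rw [← Matrix.mul_assoc (star (hA.eigenvectorUnitary : Matrix V V ℝ))
      (hA.eigenvectorUnitary : Matrix V V ℝ), hU', Matrix.one_mul]
  rw [key, Matrix.trace_mul_cycle, ← Matrix.mul_assoc, hU', Matrix.one_mul,
    Matrix.diagonal_mul_diagonal, Matrix.trace_diagonal]
  apply Finset.sum_congr rfl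
  intro i _
  simp [pow_two]

lemma smul_one_sub_posSemidef {V : Type*} [Fintype V] [DecidableEq V]
    (A : Matrix V V ℝ) (hA : A.IsHermitian) (L : ℝ) (hL : ∀ i, hA.eigenvalues i ≤ L) :
    (L • (1 : Matrix V V ℝ) - A).PosSemidef := by
  have hU : (hA.eigenvectorUnitary : Matrix V V ℝ) *
      star (hA.eigenvectorUnitary : Matrix V V ℝ) = 1 :=
    Matrix.mem_unitaryGroup_iff.mp hA.eigenvectorUnitary.2
  have hdiag : Matrix.diagonal (fun i => L - hA.eigenvalues i)
      = L • (1 : Matrix V V ℝ) - Matrix.diagonal (RCLike.ofReal ∘ hA.eigenvalues) := by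
    ext j k
    rcases eq_or_ne j k with rfl | h
    · simp
    · simp [Matrix.diagonal_apply_ne _ h, Matrix.one_apply_ne h]
  have key : L • (1 : Matrix V V ℝ) - A
      = (hA.eigenvectorUnitary : Matrix V V ℝ) *
        Matrix.diagonal (fun i => L - hA.eigenvalues i) *
        ((hA.eigenvectorUnitary : Matrix V V ℝ))ᴴ := by
    rw [← Matrix.star_eq_conjTranspose, hdiag, Matrix.mul_sub, Matrix.sub_mul,
      mul_smul_comm, smul_mul_assoc, Matrix.mul_one, hU]
    conv_lhs => rw [hA.spectral_theorem, Unitary.conjStarAlgAut_apply]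
  rw [key]
  exact (Matrix.posSemidef_diagonal_iff.mpr
    (fun i => sub_nonneg.mpr (hL i))).mul_mul_conjTranspose_same _

theorem energy_lower_bound_main {V : Type*} [Fintype V] [DecidableEq V] [Nonempty V]
    (G : SimpleGraph V) [DecidableRel G.Adj]
    (hA : (G.adjMatrix ℝ).IsHermitian)
    (hpos : (⨆ i, hA.eigenvalues i) + (⨅ i, |hA.eigenvalues i|) > 0) :
    (∑ i, |hA.eigenvalues i|) ≥
      (2 * G.edgeFinset.card +
        (Fintype.card V : ℝ) * (⨆ i, hA.eigenvalues i) * (⨅ i, |hA.eigenvalues i|)) /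
        ((⨆ i, hA.eigenvalues i) + (⨅ i, |hA.eigenvalues i|)) := by
  set A : Matrix V V ℝ := G.adjMatrix ℝ with hAdef
  set lam := hA.eigenvalues with hlam
  set L : ℝ := ⨆ i, lam i with hL
  set t : ℝ := ⨅ i, |lam i| with ht
  have htle : ∀ i, t ≤ |lam i| := fun i =>
    ciInf_le (Set.Finite.bddBelow (Set.finite_range _)) i
  have hLle : ∀ i, |lam i| ≤ L := by
    intro i
    have hPSD : (L • (1 : Matrix V V ℝ) - A).PosSemidef :=
      smul_one_sub_posSemidef A hA L
        (fun j => le_ciSup (Set.Finite.bddAbove (Set.finite_range _)) j)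
    set v : V → ℝ := ⇑(hA.eigenvectorBasis i) with hv
    have hAv : A *ᵥ v = lam i • v := hA.mulVec_eigenvectorBasis i
    have hvnorm : v ⬝ᵥ v = 1 := by
      have h1 : ‖hA.eigenvectorBasis i‖ = 1 := hA.eigenvectorBasis.orthonormal.1 i
      have h2 : (inner ℝ (hA.eigenvectorBasis i) (hA.eigenvectorBasis i) : ℝ) = 1 := by
        rw [real_inner_self_eq_norm_sq, h1]; norm_num
      rw [← h2, PiLp.inner_apply]
      simp [dotProduct, hv, pow_two]
    set w : V → ℝ := fun j => |v j| with hw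
    have hwnorm : w ⬝ᵥ w = 1 := by
      rw [← hvnorm]
      simp [dotProduct, hw, abs_mul_abs_self]
    have hvAv : v ⬝ᵥ (A *ᵥ v) = lam i := by
      rw [hAv, dotProduct_smul, hvnorm]; simp
    have hwAw : |lam i| ≤ w ⬝ᵥ (A *ᵥ w) := by
      have hexp : ∀ x : V → ℝ, x ⬝ᵥ (A *ᵥ x) = ∑ j, ∑ k, x j * (A j k * x k) := by
        intro x
        simp [dotProduct, Matrix.mulVec, Finset.mul_sum]
      rw [hexp, ← hvAv, hexp]
      calc |∑ j, ∑ k, v j * (A j k * v k)|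
          ≤ ∑ j, |∑ k, v j * (A j k * v k)| := Finset.abs_sum_le_sum_abs _ _
        _ ≤ ∑ j, ∑ k, |v j * (A j k * v k)| :=
            Finset.sum_le_sum (fun j _ => Finset.abs_sum_le_sum_abs _ _)
        _ = ∑ j, ∑ k, w j * (A j k * w k) := by
            apply Finset.sum_congr rfl; intro j _
            apply Finset.sum_congr rfl; intro k _
            rw [abs_mul, abs_mul, hw]
            have hnn : |A j k| = A j k := abs_of_nonneg (by
              rw [hAdef, SimpleGraph.adjMatrix_apply]
              split <;> norm_num)
            rw [hnn]
    have hq := hPSD.dotProduct_mulVec_nonneg w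
    have hstarw : star w = w := by funext j; simp
    rw [hstarw] at hq
    have hexpand : w ⬝ᵥ ((L • (1 : Matrix V V ℝ) - A) *ᵥ w) = L - w ⬝ᵥ (A *ᵥ w) := by
      rw [Matrix.sub_mulVec, dotProduct_sub, Matrix.smul_mulVec,
        Matrix.one_mulVec, dotProduct_smul, hwnorm]
      simp
    rw [hexpand] at hq
    linarith
  -- sum of squares = 2m
  have hsumsq : ∑ i, (lam i) ^ 2 = 2 * (G.edgeFinset.card : ℝ) := by
    rw [hlam, ← trace_sq_eq_sum_sq_eigenvalues _ hA]
    have htr : (A * A).trace = ∑ i, ((G.degree i : ℝ)) := by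
      rw [Matrix.trace]
      apply Finset.sum_congr rfl
      intro i _
      exact G.adjMatrix_mul_self_apply_self i
    have hdeg : (∑ i, (G.degree i : ℝ)) = 2 * (G.edgeFinset.card : ℝ) := by
      rw [← Nat.cast_sum, G.sum_degrees_eq_twice_card_edges]
      push_cast
      ring
    rw [htr, hdeg]
  have hkey : ∀ i, (lam i) ^ 2 + L * t ≤ (L + t) * |lam i| := by
    intro i
    have h1 : 0 ≤ (L - |lam i|) * (|lam i| - t) :=
      mul_nonneg (sub_nonneg.mpr (hLle i)) (sub_nonneg.mpr (htle i))
    have h2 : (lam i) ^ 2 = |lam i| ^ 2 := (sq_abs _).symm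
    nlinarith [h1, h2]
  have hsum : ∑ i, ((lam i) ^ 2 + L * t) ≤ ∑ i, (L + t) * |lam i| :=
    Finset.sum_le_sum (fun i _ => hkey i)
  have hmul : ∑ i, (L + t) * |lam i| = (L + t) * ∑ i, |lam i| :=
    (Finset.mul_sum _ _ _).symm
  rw [Finset.sum_add_distrib, Finset.sum_const, Finset.card_univ,
    nsmul_eq_mul, hsumsq, hmul] at hsum
  rw [ge_iff_le, div_le_iff₀ hpos]
  nlinarith [hsum]
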